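/- Assume condition (SP_v). Then C_S := sup_{E ∈ ℝ} ‖m_v(E)‖ < ∞, where m_v(E) = (h_S + v_S(E,v) − E)^{−1}; moreover, for every self-adjoint operator w on ℓ²(S) and every ξ ∈ ℝ with |ξ|·C_S·‖w‖ < 1, the operator h_S + ξw + v_S(E,v) − E on ℓ²(S) is invertible for every E ∈ ℝ, i.e. condition (SP_v) holds with h_S replaced by h_S + ξw. -/

import Mathlib

noncomputable section
set_option maxHeartbeats 1000000
open Complex Filter MeasureTheory

/-- The Hilbert space `⊕_{j=1}^m ℓ²(ℕ)` of the leads, realized as `ℓ²(Fin m × ℕ)`. -/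
abbrev LeadSp (m : ℕ) : Type := lp (fun _ : Fin m × ℕ => ℂ) 2

/-- The Hilbert space `ℓ²(S)` of the finite sample. -/
abbrev SampSp (S : Type) [Fintype S] : Type := EuclideanSpace ℂ S

/-- The full one-particle Hilbert space `𝔥 = ℓ²(S) ⊕ 𝔥_R`. -/
abbrev FullSp (S : Type) [Fintype S] (m : ℕ) : Type := WithLp 2 (SampSp S × LeadSp m)

/-- Embedding of a pair into the full space. -/
def emb {S : Type} [Fintype S] {m : ℕ} (p : SampSp S × LeadSp m) : FullSp S m :=
  (WithLp.equiv 2 (SampSp S × LeadSp m)).symm p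

/-- Projection of the full space onto the sample component. -/
def prjS {S : Type} [Fintype S] {m : ℕ} (x : FullSp S m) : SampSp S :=
  ((WithLp.equiv 2 (SampSp S × LeadSp m)) x).1

/-- Projection of the full space onto the reservoir component. -/
def prjR {S : Type} [Fintype S] {m : ℕ} (x : FullSp S m) : LeadSp m :=
  ((WithLp.equiv 2 (SampSp S × LeadSp m)) x).2

/-- Kronecker delta at site `x` of lead `j`. -/
def deltaR {m : ℕ} (j : Fin m) (x : ℕ) : LeadSp m := lp.single 2 (j, x) (1 : ℂ)

/-- The set of thresholds `𝒯 = {v_j ± 2 c_R}`. -/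
def thresholds {m : ℕ} (v : Fin m → ℝ) (cR : ℝ) : Set ℝ :=
  {E : ℝ | ∃ j : Fin m, E = v j + 2 * cR ∨ E = v j - 2 * cR}

/-- square root of a real number, as a complex number -/
def scR (x : ℝ) : ℂ := if x ≤ 0 then (Real.sqrt (-x) : ℂ) * I else (Real.sqrt x : ℂ)

lemma scR_sq (x : ℝ) : scR x ^ 2 = (x : ℂ) := by
  unfold scR
  split_ifs with h
  · have : (Real.sqrt (-x) : ℂ) ^ 2 = ((-x : ℝ) : ℂ) := by
      norm_cast
      exact Real.sq_sqrt (by linarith)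
    rw [mul_pow, this, I_sq]
    push_cast; ring
  · norm_cast
    exact Real.sq_sqrt (by linarith)

lemma continuous_scR : Continuous scR := by
  apply Continuous.if_le
  · exact (Complex.continuous_ofReal.comp (Real.continuous_sqrt.comp continuous_neg)).mul
      continuous_const
  · exact Complex.continuous_ofReal.comp Real.continuous_sqrt
  · exact continuous_id
  · exact continuous_const
  · intro x hx; subst hx; simp

/-- boundary value of the inverse Joukowski map -/
def lamB (θ : ℝ) : ℂ :=
  if θ ≤ -2 then ((θ : ℂ) - scR (4 - θ ^ 2) * I) / 2 else ((θ : ℂ) + scR (4 - θ ^ 2) * I) / 2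

lemma lamB_root (θ : ℝ) : lamB θ ^ 2 - (θ : ℂ) * lamB θ + 1 = 0 := by
  have hs : scR (4 - θ ^ 2) ^ 2 = ((4 - θ ^ 2 : ℝ) : ℂ) := scR_sq _
  unfold lamB
  split_ifs <;>
  · push_cast at hs ⊢
    linear_combination (I ^ 2 / 4) * hs + ((4 - (θ : ℂ) ^ 2) / 4) * Complex.I_sq

lemma continuous_lamB : Continuous lamB := by
  apply Continuous.if_le
  · exact (Complex.continuous_ofReal.sub ((continuous_scR.comp (by continuity)).mul
      continuous_const)).div_const 2
  · exact (Complex.continuous_ofReal.add ((continuous_scR.comp (by continuity)).mul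
      continuous_const)).div_const 2
  · exact continuous_id
  · exact continuous_const
  · intro x hx; subst hx; norm_num [scR]

lemma lamB_ne_zero (θ : ℝ) : lamB θ ≠ 0 := by
  intro h
  have := lamB_root θ
  rw [h] at this
  simp at this

lemma lamB_eq_left {θ : ℝ} (h : θ ≤ -2) :
    lamB θ = (((θ + Real.sqrt (θ ^ 2 - 4)) / 2 : ℝ) : ℂ) := by
  have h4 : (4 - θ ^ 2) ≤ 0 := by nlinarith
  have h5 : -(4 - θ ^ 2) = θ ^ 2 - 4 := by ring
  unfold lamB scR
  rw [if_pos h, if_pos h4, h5]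
  push_cast
  rw [mul_assoc, Complex.I_mul_I]
  ring

lemma lamB_eq_right {θ : ℝ} (h : 2 ≤ θ) :
    lamB θ = (((θ - Real.sqrt (θ ^ 2 - 4)) / 2 : ℝ) : ℂ) := by
  have h4 : (4 - θ ^ 2) ≤ 0 := by nlinarith
  have h5 : -(4 - θ ^ 2) = θ ^ 2 - 4 := by ring
  unfold lamB scR
  rw [if_neg (by linarith), if_pos h4, h5]
  push_cast
  rw [mul_assoc, Complex.I_mul_I]
  ring

lemma lamB_eq_mid {θ : ℝ} (h1 : -2 < θ) (h2 : θ < 2) :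
    lamB θ = ((θ : ℂ) + (Real.sqrt (4 - θ ^ 2) : ℂ) * I) / 2 := by
  have h4 : ¬ (4 - θ ^ 2) ≤ 0 := by nlinarith
  unfold lamB scR
  rw [if_neg (by linarith), if_neg h4]

lemma sqrt_lt_abs {θ : ℝ} (h : 2 < |θ|) : Real.sqrt (θ ^ 2 - 4) < |θ| := by
  rw [show θ ^ 2 - 4 = |θ| ^ 2 - 4 by rw [_root_.sq_abs]]
  have h0 : (0:ℝ) ≤ |θ| := abs_nonneg θ
  nlinarith [Real.sq_sqrt (show (0:ℝ) ≤ |θ|^2 - 4 by nlinarith),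
    Real.sqrt_nonneg (|θ|^2 - 4)]

lemma abs_lt_sub_sqrt {θ : ℝ} (h : 2 < |θ|) : |θ| - 2 < Real.sqrt (θ ^ 2 - 4) := by
  have h2 : (0:ℝ) ≤ θ ^ 2 - 4 := by nlinarith [_root_.sq_abs θ]
  nlinarith [Real.sq_sqrt h2, Real.sqrt_nonneg (θ^2-4), _root_.sq_abs θ]

lemma lamB_abs_le (θ : ℝ) : ‖lamB θ‖ ≤ 1 := by
  rcases le_or_gt θ (-2) with h | h
  · rw [lamB_eq_left h, Complex.norm_real, Real.norm_eq_abs]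
    have h2 : (0:ℝ) ≤ θ ^ 2 - 4 := by nlinarith
    have hs := Real.sq_sqrt h2
    have hs2 := Real.sqrt_nonneg (θ^2-4)
    have h3 : Real.sqrt (θ^2-4) ≤ -θ := by nlinarith
    have h4 : -θ - 2 ≤ Real.sqrt (θ^2-4) := by nlinarith
    rw [abs_le]; constructor <;> [skip; skip] <;> nlinarith
  rcases le_or_gt 2 θ with h' | h'
  · rw [lamB_eq_right h', Complex.norm_real, Real.norm_eq_abs]
    have h2 : (0:ℝ) ≤ θ ^ 2 - 4 := by nlinarith
    have hs := Real.sq_sqrt h2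
    have hs2 := Real.sqrt_nonneg (θ^2-4)
    have h3 : Real.sqrt (θ^2-4) ≤ θ := by nlinarith
    have h4 : θ - 2 ≤ Real.sqrt (θ^2-4) := by nlinarith
    rw [abs_le]; constructor <;> nlinarith
  · rw [lamB_eq_mid h h']
    have h2 : (0:ℝ) ≤ 4 - θ ^ 2 := by nlinarith
    have habs : ‖((θ:ℂ) + (Real.sqrt (4 - θ^2) : ℂ) * I) / 2‖ ^ 2 = 1 := by
      rw [← Complex.normSq_eq_norm_sq]
      simp [Complex.normSq_apply]
      nlinarith [Real.sq_sqrt h2]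
    nlinarith [norm_nonneg (((θ:ℂ) + (Real.sqrt (4 - θ^2) : ℂ) * I) / 2)]

lemma lamB_dichotomy (θ : ℝ) :
    lamB θ = (θ : ℂ) - lamB θ ∨ ‖lamB θ‖ < 1 ∨
      (0 < (lamB θ).im ∧ ((θ : ℂ) - lamB θ).im < 0) := by
  rcases le_or_gt θ (-2) with h | h
  · rcases eq_or_lt_of_le h with rfl | h2
    · left
      rw [lamB_eq_left le_rfl]
      norm_num
    · right; left
      rw [lamB_eq_left h, Complex.norm_real, Real.norm_eq_abs]
      have habs : 2 < |θ| := by rw [abs_of_neg (by linarith)]; linarith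
      have k1 := sqrt_lt_abs habs
      have k2 := abs_lt_sub_sqrt habs
      rw [abs_of_neg (by linarith)] at k1 k2
      rw [abs_lt]; constructor <;> [nlinarith; nlinarith]
  rcases le_or_gt 2 θ with h' | h'
  · rcases eq_or_lt_of_le h' with rfl | h2
    · left
      rw [lamB_eq_right le_rfl]
      norm_num
    · right; left
      rw [lamB_eq_right h', Complex.norm_real, Real.norm_eq_abs]
      have habs : 2 < |θ| := by rw [abs_of_pos (by linarith)]; linarith
      have k1 := sqrt_lt_abs habs
      have k2 := abs_lt_sub_sqrt habs
      rw [abs_of_pos (by linarith)] at k1 k2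
      rw [abs_lt]; constructor <;> [nlinarith; nlinarith]
  · right; right
    rw [lamB_eq_mid h h']
    have h2 : (0:ℝ) < 4 - θ ^ 2 := by nlinarith
    have h3 : 0 < Real.sqrt (4 - θ^2) := Real.sqrt_pos.mpr h2
    constructor
    · simp
      linarith
    · simp
      linarith

lemma exists_small_root {θ : ℂ} (hθ : θ.im ≠ 0) :
    ∃ u : ℂ, u ^ 2 - θ * u + 1 = 0 ∧ ‖u‖ < 1 := by
  obtain ⟨s, hs⟩ : ∃ s : ℂ, s ^ 2 = θ ^ 2 - 4 :=
    ⟨(θ ^ 2 - 4) ^ ((2 : ℂ)⁻¹), Complex.cpow_nat_inv_pow _ two_ne_zero⟩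
  set r₁ := (θ + s) / 2 with hr₁
  set r₂ := (θ - s) / 2 with hr₂
  have hroot₁ : r₁ ^ 2 - θ * r₁ + 1 = 0 := by rw [hr₁]; linear_combination hs / 4
  have hroot₂ : r₂ ^ 2 - θ * r₂ + 1 = 0 := by rw [hr₂]; linear_combination hs / 4
  have hprod : r₁ * r₂ = 1 := by rw [hr₁, hr₂]; linear_combination -hs / 4
  rcases lt_or_ge (‖r₁‖) 1 with h1 | h1
  · exact ⟨r₁, hroot₁, h1⟩
  rcases lt_or_ge (‖r₂‖) 1 with h2 | h2
  · exact ⟨r₂, hroot₂, h2⟩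
  exfalso
  have habs : ‖r₁‖ * ‖r₂‖ = 1 := by
    rw [← norm_mul, hprod, norm_one]
  have e1 : ‖r₁‖ = 1 := by nlinarith
  have e2 : r₂ = starRingEnd ℂ r₁ := by
    have hn : Complex.normSq r₁ = 1 := by
      rw [← Complex.sq_norm, e1]; norm_num
    have : (starRingEnd ℂ r₁) * (r₁ * r₂) = starRingEnd ℂ r₁ := by rw [hprod, mul_one]
    rw [← mul_assoc, Complex.conj_mul'] at this
    have hnorm : ‖r₁‖ = 1 := by rw [e1]
    rw [hnorm] at this
    simpa using this
  have hsum : θ = r₁ + r₂ := by rw [hr₁, hr₂]; ring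
  apply hθ
  rw [hsum, e2, Complex.add_im, Complex.conj_im]
  ring

lemma root_unique {θ u u' : ℂ} (h : u ^ 2 - θ * u + 1 = 0) (h' : u' ^ 2 - θ * u' + 1 = 0)
    (hu : ‖u‖ < 1) (hu' : ‖u'‖ < 1) : u = u' := by
  have key : (u' - u) * (u * u' - 1) = 0 := by linear_combination u * h' - u' * h
  rcases mul_eq_zero.mp key with h0 | h0
  · exact (sub_eq_zero.mp h0).symm
  · exfalso
    rw [sub_eq_zero] at h0
    have : ‖u * u'‖ = 1 := by rw [h0]; simp
    rw [norm_mul] at this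
    nlinarith [norm_nonneg u, norm_nonneg u']

lemma root_im_pos {θ u : ℂ} (hθ : θ.im < 0) (h : u ^ 2 - θ * u + 1 = 0)
    (hu : ‖u‖ < 1) : 0 < u.im := by
  have hu0 : u ≠ 0 := by intro h0; rw [h0] at h; simp at h
  have hn : 0 < Complex.normSq u := Complex.normSq_pos.mpr hu0
  have hn1 : Complex.normSq u < 1 := by
    rw [← Complex.sq_norm]; nlinarith [norm_nonneg u]
  have hθeq : θ = u + u⁻¹ := by
    field_simp
    linear_combination -h
  rw [hθeq, Complex.add_im, Complex.inv_im] at hθ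
  by_contra him
  push_neg at him
  have h1 : 0 ≤ -u.im := by linarith
  have h2 : -u.im / Complex.normSq u ≥ -u.im := by
    rw [ge_iff_le, le_div_iff₀ hn]
    nlinarith
  have : u.im + -u.im / Complex.normSq u ≥ 0 := by
    have : -(-u.im / Complex.normSq u) ≤ u.im + -u.im / Complex.normSq u + u.im := by nlinarith
    linarith [h2]
  linarith

open scoped Classical in
def uRoot (θ : ℂ) : ℂ :=
  if h : ∃ u : ℂ, u ^ 2 - θ * u + 1 = 0 ∧ ‖u‖ < 1 then h.choose else 0

lemma uRoot_spec {θ : ℂ} (hθ : θ.im ≠ 0) :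
    uRoot θ ^ 2 - θ * uRoot θ + 1 = 0 ∧ ‖uRoot θ‖ < 1 := by
  have h := exists_small_root hθ
  rw [uRoot, dif_pos h]
  exact h.choose_spec

lemma uRoot_eq {θ u : ℂ} (hθ : θ.im ≠ 0) (h : u ^ 2 - θ * u + 1 = 0)
    (hu : ‖u‖ < 1) : uRoot θ = u :=
  root_unique (uRoot_spec hθ).1 h (uRoot_spec hθ).2 hu

lemma lamB_sum_prod (θ : ℝ) :
    lamB θ * ((θ : ℂ) - lamB θ) = 1 := by
  linear_combination -(lamB_root θ)

lemma tendsto_uRoot (c : ℝ) (hc : 0 < c) (θ₀ : ℝ) :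
    Tendsto (fun ε : ℝ => uRoot ((θ₀ : ℂ) - (ε / c : ℝ) * I)) (nhdsWithin 0 (Set.Ioi 0))
      (nhds (lamB θ₀)) := by
  set l := lamB θ₀ with hl
  set l' := (θ₀ : ℂ) - l with hl'
  -- key bound for any admissible ε
  have key : ∀ ε : ℝ, 0 < ε →
      ‖uRoot ((θ₀ : ℂ) - (ε / c : ℝ) * I) - l‖ *
        ‖uRoot ((θ₀ : ℂ) - (ε / c : ℝ) * I) - l'‖ ≤ ε / c ∧
      0 < (uRoot ((θ₀ : ℂ) - (ε / c : ℝ) * I)).im ∧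
      ‖uRoot ((θ₀ : ℂ) - (ε / c : ℝ) * I)‖ < 1 := by
    intro ε hε
    set θ := (θ₀ : ℂ) - (ε / c : ℝ) * I with hθdef
    have him : θ.im = -(ε / c) := by simp [hθdef]
    have him' : θ.im ≠ 0 := by
      rw [him]
      have : 0 < ε / c := div_pos hε hc
      linarith
    obtain ⟨hroot, habs⟩ := uRoot_spec him'
    set u := uRoot θ with hu
    have him2 : 0 < u.im := root_im_pos (by rw [him]; simp [div_pos hε hc]) hroot habs
    refine ⟨?_, him2, habs⟩
    have hfac : (u - l) * (u - l') = -((ε / c : ℝ) : ℂ) * I * u := by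
      rw [hl']
      linear_combination hroot - lamB_root θ₀
    rw [← norm_mul, hfac]
    have : ‖-((ε / c : ℝ) : ℂ) * I * u‖ = (ε / c) * ‖u‖ := by
      rw [norm_mul, norm_mul]
      simp [abs_of_pos (div_pos hε hc), abs_of_pos hε, abs_of_pos hc]
    rw [this]
    nlinarith [norm_nonneg u, div_pos hε hc]
  -- a uniform lower bound for the distance to the "other" root, except in the double root case
  rw [Metric.tendsto_nhdsWithin_nhds]
  intro δ hδ
  rcases lamB_dichotomy θ₀ with hcase | hcase
  · -- double root : l' = l
    refine ⟨c * δ ^ 2, mul_pos hc (pow_pos hδ 2), ?_⟩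
    intro ε hε hdist
    rw [Real.dist_eq, sub_zero, abs_of_pos hε] at hdist
    obtain ⟨hb, _, _⟩ := key ε hε
    have hll : l' = l := by rw [hl', hl, ← hcase]
    rw [hll] at hb
    rw [Complex.dist_eq]
    have hεc : ε / c < δ ^ 2 := by
      rw [div_lt_iff₀ hc]; linarith [mul_comm c (δ^2)]
    have hsq : ‖uRoot ((θ₀ : ℂ) - (ε / c : ℝ) * I) - l‖ ^ 2 < δ ^ 2 := by
      nlinarith [norm_nonneg (uRoot ((θ₀ : ℂ) - (ε / c : ℝ) * I) - l)]
    exact lt_of_pow_lt_pow_left₀ 2 (le_of_lt hδ) hsq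
  · -- separated roots : get a lower bound β on |u - l'|
    have hsep : ∃ β : ℝ, 0 < β ∧ ∀ u : ℂ, 0 < u.im → ‖u‖ < 1 →
        β ≤ ‖u - l'‖ := by
      rcases hcase with hlt | ⟨him1, him2⟩
      · -- |l| < 1 hence |l'| > 1
        have hl0 : l ≠ 0 := lamB_ne_zero θ₀
        have hprod : ‖l‖ * ‖l'‖ = 1 := by
          rw [← norm_mul, lamB_sum_prod]; simp
        have habsl : 0 < ‖l‖ := norm_pos_iff.mpr hl0
        have hgt : 1 < ‖l'‖ := by
          rcases le_or_gt (‖l'‖) 1 with h | h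
          · nlinarith
          · exact h
        refine ⟨‖l'‖ - 1, by linarith, fun u _ hu => ?_⟩
        calc ‖l'‖ - 1 ≤ ‖l'‖ - ‖u‖ := by linarith
        _ ≤ ‖u - l'‖ := by
            have h9 : ‖l'‖ - ‖u‖ ≤ ‖l' - u‖ := norm_sub_norm_le l' u
            rw [norm_sub_rev u l']
            linarith
      · -- im l' < 0, im u > 0
        refine ⟨-l'.im, by linarith, fun u hui _ => ?_⟩
        calc -l'.im ≤ u.im - l'.im := by linarith
        _ ≤ |(u - l').im| := by rw [Complex.sub_im]; exact le_abs_self _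
        _ ≤ ‖u - l'‖ := Complex.abs_im_le_norm _
    obtain ⟨β, hβ, hsepb⟩ := hsep
    refine ⟨c * (δ * β), mul_pos hc (mul_pos hδ hβ), ?_⟩
    intro ε hε hdist
    rw [Real.dist_eq, sub_zero, abs_of_pos hε] at hdist
    obtain ⟨hb, him2, habs⟩ := key ε hε
    have hlow := hsepb _ him2 habs
    rw [Complex.dist_eq]
    have hεc : ε / c < δ * β := by rw [div_lt_iff₀ hc]; linarith [mul_comm c (δ * β)]
    nlinarith [norm_nonneg (uRoot ((θ₀ : ℂ) - (ε / c : ℝ) * I) - l),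
      norm_nonneg (uRoot ((θ₀ : ℂ) - (ε / c : ℝ) * I) - l')]

lemma rec_solve {θ u : ℂ} (hroot : u ^ 2 - θ * u + 1 = 0) (hu : ‖u‖ < 1)
    {f : ℕ → ℂ} (hf : Tendsto f atTop (nhds 0))
    (hrec : ∀ x : ℕ, f (x + 2) = θ * f (x + 1) - f x) :
    ∀ x : ℕ, f x = f 0 * u ^ x := by
  have hu0 : u ≠ 0 := by intro h0; rw [h0] at hroot; simp at hroot
  set g : ℕ → ℂ := fun x => f (x + 1) - u * f x with hg
  have hgstep : ∀ x : ℕ, u * g (x + 1) = g x := by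
    intro x
    simp only [hg]
    rw [hrec x]
    linear_combination -f (x + 1) * hroot
  have hgiter : ∀ x : ℕ, g 0 = u ^ x * g x := by
    intro x
    induction x with
    | zero => simp
    | succ n ih => rw [ih, ← hgstep n]; ring
  have hgtends : Tendsto g atTop (nhds 0) := by
    have h1 : Tendsto (fun x : ℕ => f (x + 1)) atTop (nhds 0) :=
      hf.comp (tendsto_add_atTop_nat 1)
    have h2 : Tendsto (fun x : ℕ => u * f x) atTop (nhds (u * 0)) := hf.const_mul u
    rw [mul_zero] at h2
    simpa using h1.sub h2
  have hg0 : g 0 = 0 := by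
    have hnorm : ∀ x : ℕ, ‖g 0‖ ≤ ‖g x‖ := by
      intro x
      rw [hgiter x, norm_mul, norm_pow]
      have h1 : ‖u‖ ^ x ≤ 1 :=
        pow_le_one₀ (norm_nonneg u) (le_of_lt hu)
      nlinarith [norm_nonneg (g x), norm_nonneg u,
        pow_nonneg (norm_nonneg u) x]
    have htends : Tendsto (fun x : ℕ => ‖g x‖) atTop (nhds 0) := by
      simpa using hgtends.norm
    have : ‖g 0‖ ≤ 0 :=
      ge_of_tendsto htends (Filter.Eventually.of_forall hnorm)
    have := le_antisymm this (norm_nonneg _)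
    exact norm_eq_zero.mp this
  have hgz : ∀ x : ℕ, g x = 0 := by
    intro x
    have := hgiter x
    rw [hg0] at this
    have := this.symm
    rcases mul_eq_zero.mp this with h | h
    · exact absurd h (pow_ne_zero x hu0)
    · exact h
  intro x
  induction x with
  | zero => simp
  | succ n ih =>
    have hgn := hgz n
    simp only [hg] at hgn
    have : f (n + 1) = u * f n := sub_eq_zero.mp hgn
    rw [this, ih]; ring

lemma lp_tendsto_zero {m : ℕ} (ψ : lp (fun _ : Fin m × ℕ => ℂ) 2) (j : Fin m) :
    Tendsto (fun x : ℕ => ψ (j, x)) atTop (nhds 0) := by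
  have hsum : Summable (fun i : Fin m × ℕ => ‖ψ i‖ ^ (2 : ℝ)) :=
    (lp.memℓp ψ).summable (by norm_num)
  have hinj : Function.Injective (fun x : ℕ => ((j, x) : Fin m × ℕ)) := by
    intro a b h
    simpa using congrArg Prod.snd h
  have hsum2 : Summable (fun x : ℕ => ‖ψ (j, x)‖ ^ (2 : ℝ)) := hsum.comp_injective hinj
  have h1 : Tendsto (fun x : ℕ => ‖ψ (j, x)‖ ^ (2 : ℝ)) atTop (nhds 0) :=
    hsum2.tendsto_atTop_zero
  rw [tendsto_zero_iff_norm_tendsto_zero]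
  have h2 := (Real.continuous_sqrt.tendsto 0).comp h1
  rw [Real.sqrt_zero] at h2
  refine h2.congr fun x => ?_
  simp only [Function.comp]
  rw [show ((2:ℝ)) = ((2:ℕ):ℝ) by norm_num, Real.rpow_natCast,
    Real.sqrt_sq (norm_nonneg _)]

lemma sum_single_apply {m : ℕ} (β : Fin m → ℂ) (k : Fin m) (x : ℕ) :
    (∑ j : Fin m, β j • deltaR j 0 : LeadSp m) (k, x) = if x = 0 then β k else 0 := by
  have hcoe : (∑ j : Fin m, β j • deltaR j 0 : LeadSp m) (k, x)
      = ∑ j : Fin m, (β j • deltaR j 0 : LeadSp m) (k, x) := by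
    rw [lp.coeFn_sum]
    simp
  rw [hcoe]
  have hterm : ∀ j : Fin m, (β j • deltaR j 0 : LeadSp m) (k, x)
      = β j * (deltaR j 0 : LeadSp m) (k, x) := by
    intro j
    rw [lp.coeFn_smul]
    simp
  simp_rw [hterm]
  rcases eq_or_ne x 0 with rfl | hx
  · rw [if_pos rfl]
    rw [Finset.sum_eq_single k]
    · rw [deltaR, lp.single_apply_self, mul_one]
    · intro j _ hj
      rw [deltaR, lp.single_apply_ne 2 _ _ (by simp [Ne, Prod.ext_iff]; exact fun h => absurd h.symm hj), mul_zero]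
    · intro h; exact absurd (Finset.mem_univ k) h
  · rw [if_neg hx]
    apply Finset.sum_eq_zero
    intro j _
    rw [deltaR, lp.single_apply_ne 2 _ _ (by simp [Ne, Prod.ext_iff, hx]), mul_zero]

lemma psi_value {m : ℕ} (cR : ℝ) (hcR : 0 < cR) (v : Fin m → ℝ)
    (hR : LeadSp m →L[ℂ] LeadSp m)
    (hR0 : ∀ (ψ : LeadSp m) (j : Fin m), (hR ψ) (j, 0) = -(cR : ℂ) * ψ (j, 1))
    (hR1 : ∀ (ψ : LeadSp m) (j : Fin m) (x : ℕ),
      (hR ψ) (j, x + 1) = -(cR : ℂ) * (ψ (j, x) + ψ (j, x + 2)))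
    (vR : LeadSp m →L[ℂ] LeadSp m)
    (hvR : ∀ (ψ : LeadSp m) (j : Fin m) (x : ℕ), (vR ψ) (j, x) = (v j : ℂ) * ψ (j, x))
    (RR : ℂ → (LeadSp m →L[ℂ] LeadSp m))
    (hRR : ∀ z : ℂ, z.im ≠ 0 →
      ((hR + vR) - z • 1) * RR z = 1 ∧ RR z * ((hR + vR) - z • 1) = 1)
    (z : ℂ) (hz : 0 < z.im) (β : Fin m → ℂ) (j : Fin m) :
    (RR z (∑ k : Fin m, β k • deltaR k 0)) (j, 0)
      = uRoot (((v j : ℂ) - z) / cR) * β j / cR := by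
  have hcR' : (cR : ℂ) ≠ 0 := by
    simp only [ne_eq, Complex.ofReal_eq_zero]
    exact ne_of_gt hcR
  set θ : ℂ := ((v j : ℂ) - z) / cR with hθ
  have hθim : θ.im ≠ 0 := by
    rw [hθ]
    simp only [Complex.div_im, Complex.sub_im, Complex.ofReal_im, Complex.sub_re,
      Complex.ofReal_re, Complex.ofReal_im]
    simp [Complex.ofReal_re, Complex.ofReal_im]
    exact ⟨ne_of_gt hz, ne_of_gt hcR⟩
  obtain ⟨hroot, habs⟩ := uRoot_spec hθim
  set u := uRoot θ with hudef
  set b : LeadSp m := ∑ k : Fin m, β k • deltaR k 0 with hb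
  set ψ : LeadSp m := RR z b with hψ
  have happ : ((hR + vR) - z • 1) ψ = b := by
    have h1 := congrArg (fun T : LeadSp m →L[ℂ] LeadSp m => T b) (hRR z (ne_of_gt hz)).1
    simpa [ContinuousLinearMap.mul_apply] using h1
  have hpt : ∀ (k : Fin m) (x : ℕ),
      (hR ψ) (k, x) + (v k : ℂ) * ψ (k, x) - z * ψ (k, x) = b (k, x) := by
    intro k x
    have h0 : (((hR + vR) - z • 1) ψ) (k, x) = b (k, x) := by rw [happ]
    rw [ContinuousLinearMap.sub_apply, ContinuousLinearMap.add_apply,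
      ContinuousLinearMap.smul_apply, ContinuousLinearMap.one_apply] at h0
    rw [lp.coeFn_sub, Pi.sub_apply, lp.coeFn_add, Pi.add_apply, lp.coeFn_smul,
      Pi.smul_apply, smul_eq_mul, hvR ψ k x] at h0
    exact h0
  set f : ℕ → ℂ := fun x => ψ (j, x) with hf
  have hrec : ∀ x : ℕ, f (x + 2) = θ * f (x + 1) - f x := by
    intro x
    have h1 := hpt j (x + 1)
    rw [hR1 ψ j x, sum_single_apply] at h1
    simp only [if_neg (Nat.succ_ne_zero x)] at h1
    have hvz : (v j : ℂ) - z = cR * θ := by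
      rw [hθ]; field_simp
    simp only [hf]
    have hgoal : (cR : ℂ) * (ψ (j, x + 2)) = (cR : ℂ) * (θ * ψ (j, x + 1) - ψ (j, x)) := by
      linear_combination -h1 + ψ (j, x+1) * hvz
    exact mul_left_cancel₀ hcR' hgoal
  have hlim : Tendsto f atTop (nhds 0) := lp_tendsto_zero ψ j
  have hsol := rec_solve hroot habs hlim hrec
  have h0 := hpt j 0
  rw [hR0 ψ j, sum_single_apply, if_pos rfl] at h0
  have hf1 : ψ (j, 1) = f 0 * u ^ 1 := hsol 1
  rw [pow_one] at hf1
  have hvz : (v j : ℂ) - z = cR * θ := by rw [hθ]; field_simp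
  -- h0 : -(cR) * ψ (j,1) + v j * ψ (j,0) - z * ψ (j,0) = β j
  have hkey : (cR : ℂ) * f 0 = u * β j := by
    have hsplit : -(cR : ℂ) * (f 0 * u) + (cR * θ) * f 0 = β j := by
      rw [← hvz]
      linear_combination h0 + (cR:ℂ) * hf1
    linear_combination u * hsplit + (cR : ℂ) * f 0 * hroot
  rw [show (RR z (∑ k : Fin m, β k • deltaR k 0)) (j, 0) = f 0 from rfl]
  field_simp
  linear_combination hkey


/-- under (SP_v) the boundary value `m_v(E)` is uniformly bounded,
`C_S = sup_E ‖m_v(E)‖ < ∞`, and for any self-adjoint `w` on `ℓ²(S)` and `ξ ∈ ℝ` with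
`|ξ| C_S ‖w‖ < 1`, condition (SP_v) holds with `h_S` replaced by `h_S + ξ w`. -/
theorem mv_uniformly_bounded_and_stability
    {S : Type} [Fintype S] [DecidableEq S] [Nonempty S]
    (m : ℕ) (hm : 0 < m)
    (cR : ℝ) (hcR : 0 < cR)
    (hS : SampSp S →L[ℂ] SampSp S) (hSsa : IsSelfAdjoint hS)
    (hR : LeadSp m →L[ℂ] LeadSp m)
    (hR0 : ∀ (ψ : LeadSp m) (j : Fin m), (hR ψ) (j, 0) = -(cR : ℂ) * ψ (j, 1))
    (hR1 : ∀ (ψ : LeadSp m) (j : Fin m) (x : ℕ),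
      (hR ψ) (j, x + 1) = -(cR : ℂ) * (ψ (j, x) + ψ (j, x + 2)))
    (φ : Fin m → SampSp S) (hφ : ∀ j, ‖φ j‖ = 1)
    (d : Fin m → ℝ) (v : Fin m → ℝ)
    (vR : LeadSp m →L[ℂ] LeadSp m)
    (hvR : ∀ (ψ : LeadSp m) (j : Fin m) (x : ℕ), (vR ψ) (j, x) = (v j : ℂ) * ψ (j, x))
    (hT : FullSp S m →L[ℂ] FullSp S m)
    (hhT : ∀ (a : SampSp S) (b : LeadSp m),
      hT (emb (a, b)) = emb
        (∑ j : Fin m, (d j : ℂ) • (b (j, 0) • φ j),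
         ∑ j : Fin m, (d j : ℂ) • ((inner ℂ (φ j) a : ℂ) • deltaR j 0)))
    (hD : FullSp S m →L[ℂ] FullSp S m)
    (hhD : ∀ (a : SampSp S) (b : LeadSp m), hD (emb (a, b)) = emb (hS a, (hR + vR) b))
    (hv : FullSp S m →L[ℂ] FullSp S m) (hhv : hv = hD + hT)
    (RR : ℂ → (LeadSp m →L[ℂ] LeadSp m))
    (hRR : ∀ z : ℂ, z.im ≠ 0 →
      ((hR + vR) - z • 1) * RR z = 1 ∧ RR z * ((hR + vR) - z • 1) = 1)
    (cmp : ℂ → (SampSp S →L[ℂ] SampSp S))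
    (hcmp : ∀ z : ℂ, z.im ≠ 0 → ∀ f : SampSp S,
      cmp z f = prjS (hT (emb (0, RR z (prjR (hT (emb (f, 0))))))))
    (vS : ℝ → (SampSp S →L[ℂ] SampSp S))
    (hvS : ∀ E : ℝ,
      Tendsto (fun ε : ℝ => -cmp ((E : ℂ) + (ε : ℂ) * I))
        (nhdsWithin 0 (Set.Ioi 0)) (nhds (vS E)))
    (hSP : ∀ E : ℝ, IsUnit (hS + vS E - (E : ℂ) • 1))
    (mv : ℝ → (SampSp S →L[ℂ] SampSp S))
    (hmv : ∀ E : ℝ,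
      (hS + vS E - (E : ℂ) • 1) * mv E = 1 ∧ mv E * (hS + vS E - (E : ℂ) • 1) = 1) :
    BddAbove (Set.range fun E : ℝ => ‖mv E‖) ∧
    ∀ w : SampSp S →L[ℂ] SampSp S, IsSelfAdjoint w →
      ∀ ξ : ℝ, |ξ| * (⨆ E : ℝ, ‖mv E‖) * ‖w‖ < 1 →
        ∀ E : ℝ, IsUnit (hS + (ξ : ℂ) • w + vS E - (E : ℂ) • 1) := by
  have hcR' : (cR : ℂ) ≠ 0 := by
    simp only [ne_eq, Complex.ofReal_eq_zero]; exact ne_of_gt hcR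
  -- rank one operators
  set Pj : Fin m → (SampSp S →L[ℂ] SampSp S) :=
    fun j => (innerSL ℂ (φ j)).smulRight (φ j) with hPjdef
  have hPj_apply : ∀ (j : Fin m) (f : SampSp S), Pj j f = (inner ℂ (φ j) f : ℂ) • φ j := by
    intro j f
    simp [hPjdef, ContinuousLinearMap.smulRight_apply]
  have hPj_norm : ∀ j : Fin m, ‖Pj j‖ ≤ 1 := by
    intro j
    refine ContinuousLinearMap.opNorm_le_bound _ zero_le_one fun f => ?_
    rw [hPj_apply, norm_smul, one_mul]
    calc ‖(inner ℂ (φ j) f : ℂ)‖ * ‖φ j‖ ≤ (‖φ j‖ * ‖f‖) * ‖φ j‖ := by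
          gcongr; exact norm_inner_le_norm _ _
    _ = ‖f‖ := by rw [hφ j]; ring
  have hprjS_emb : ∀ p : SampSp S × LeadSp m, prjS (emb p) = p.1 := by
    intro p; simp [prjS, emb]
  have hprjR_emb : ∀ p : SampSp S × LeadSp m, prjR (emb p) = p.2 := by
    intro p; simp [prjR, emb]
  -- resolvent formula for cmp
  have hcmp_formula : ∀ z : ℂ, 0 < z.im →
      cmp z = ∑ j : Fin m, ((d j : ℂ) ^ 2 * uRoot (((v j : ℂ) - z) / cR) / cR) • Pj j := by
    intro z hz
    refine ContinuousLinearMap.ext fun f => ?_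
    rw [hcmp z (ne_of_gt hz) f]
    have h1 : hT (emb (f, 0)) = emb (0,
        ∑ j : Fin m, ((d j : ℂ) * (inner ℂ (φ j) f : ℂ)) • deltaR j 0) := by
      rw [hhT f 0]
      congr 1
      refine Prod.ext ?_ ?_
      · simp
      · simp [smul_smul]
    rw [h1, hprjR_emb]
    have h2 : ∀ j : Fin m,
        (RR z (∑ k : Fin m, ((d k : ℂ) * (inner ℂ (φ k) f : ℂ)) • deltaR k 0)) (j, 0)
          = uRoot (((v j : ℂ) - z) / cR) * ((d j : ℂ) * (inner ℂ (φ j) f : ℂ)) / cR :=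
      fun j => psi_value cR hcR v hR hR0 hR1 vR hvR RR hRR z hz _ j
    rw [hhT (0 : SampSp S) (RR z (∑ k : Fin m, ((d k : ℂ) * (inner ℂ (φ k) f : ℂ)) • deltaR k 0)), hprjS_emb]
    simp only [ContinuousLinearMap.sum_apply, ContinuousLinearMap.smul_apply, Prod.fst]
    refine Finset.sum_congr rfl fun j _ => ?_
    rw [h2 j, hPj_apply, smul_smul, smul_smul]
    congr 1
    ring
  -- boundary value formula for vS
  have hvS_formula : ∀ E : ℝ,
      vS E = -∑ j : Fin m, ((d j : ℂ) ^ 2 * lamB ((v j - E) / cR) / cR) • Pj j := by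
    intro E
    refine tendsto_nhds_unique (hvS E) ?_
    have htend : ∀ j : Fin m,
        Tendsto (fun ε : ℝ => uRoot (((v j : ℂ) - ((E : ℂ) + (ε : ℂ) * I)) / cR))
          (nhdsWithin 0 (Set.Ioi 0)) (nhds (lamB ((v j - E) / cR))) := by
      intro j
      refine (tendsto_uRoot cR hcR ((v j - E) / cR)).congr fun ε => ?_
      congr 1
      push_cast
      ring
    have hassembled : Tendsto
        (fun ε : ℝ => -(∑ j : Fin m,
          ((d j : ℂ) ^ 2 * uRoot (((v j : ℂ) - ((E : ℂ) + (ε : ℂ) * I)) / cR) / cR) • Pj j))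
        (nhdsWithin 0 (Set.Ioi 0))
        (nhds (-∑ j : Fin m, ((d j : ℂ) ^ 2 * lamB ((v j - E) / cR) / cR) • Pj j)) := by
      refine Tendsto.neg (tendsto_finset_sum _ fun j _ => ?_)
      exact Tendsto.smul_const (((htend j).const_mul ((d j : ℂ) ^ 2)).div_const (cR : ℂ)) (Pj j)
    refine Tendsto.congr' ?_ hassembled
    refine Filter.eventuallyEq_of_mem self_mem_nhdsWithin fun ε hε => ?_
    have him : ((E : ℂ) + (ε : ℂ) * I).im = ε := by simp
    rw [hcmp_formula ((E : ℂ) + (ε : ℂ) * I) (by rw [him]; exact hε)]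
  -- uniform bound on vS
  set D : ℝ := ∑ j : Fin m, (d j) ^ 2 / cR with hDdef
  have hD_nonneg : 0 ≤ D := Finset.sum_nonneg fun j _ => by positivity
  have hvS_bound : ∀ E : ℝ, ‖vS E‖ ≤ D := by
    intro E
    rw [hvS_formula E, norm_neg]
    calc ‖∑ j : Fin m, ((d j : ℂ) ^ 2 * lamB ((v j - E) / cR) / cR) • Pj j‖
        ≤ ∑ j : Fin m, ‖((d j : ℂ) ^ 2 * lamB ((v j - E) / cR) / cR) • Pj j‖ :=
          norm_sum_le _ _
      _ ≤ D := by
          rw [hDdef]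
          refine Finset.sum_le_sum fun j _ => ?_
          refine le_trans (ContinuousLinearMap.opNorm_smul_le _ _) ?_
          have h1 : ‖(d j : ℂ) ^ 2 * lamB ((v j - E) / cR) / cR‖ ≤ (d j) ^ 2 / cR := by
            rw [norm_div, norm_mul]
            have h2 : ‖lamB ((v j - E) / cR)‖ ≤ 1 := by
              exact lamB_abs_le _
            have h3 : ‖((d j : ℂ)) ^ 2‖ = (d j) ^ 2 := by
              rw [norm_pow, Complex.norm_real, Real.norm_eq_abs, _root_.sq_abs]
            have h4 : ‖((cR : ℝ) : ℂ)‖ = cR := by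
              rw [Complex.norm_real, Real.norm_eq_abs, abs_of_pos hcR]
            rw [h3, h4]
            calc (d j) ^ 2 * ‖lamB ((v j - E) / cR)‖ / cR ≤ (d j) ^ 2 * 1 / cR := by
                  gcongr
              _ = (d j) ^ 2 / cR := by ring
          calc ‖(d j : ℂ) ^ 2 * lamB ((v j - E) / cR) / cR‖ * ‖Pj j‖
              ≤ ((d j) ^ 2 / cR) * 1 := by
                apply mul_le_mul h1 (hPj_norm j) (norm_nonneg _) (by positivity)
            _ = (d j) ^ 2 / cR := mul_one _
  -- mv via Ring.inverse
  have hmv_eq : ∀ E : ℝ, mv E = Ring.inverse (hS + vS E - (E : ℂ) • 1) := by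
    intro E
    have hu := hSP E
    rw [← hu.unit_spec, Ring.inverse_unit]
    have h1 : mv E * ((hu.unit : (SampSp S →L[ℂ] SampSp S)ˣ) : SampSp S →L[ℂ] SampSp S) = 1 := by
      rw [hu.unit_spec]; exact (hmv E).2
    calc mv E = mv E * ((hu.unit : SampSp S →L[ℂ] SampSp S) * ((hu.unit⁻¹ : (SampSp S →L[ℂ] SampSp S)ˣ) : SampSp S →L[ℂ] SampSp S)) := by
          rw [← Units.val_mul, mul_inv_cancel]; simp
      _ = (mv E * (hu.unit : SampSp S →L[ℂ] SampSp S)) * ((hu.unit⁻¹ : (SampSp S →L[ℂ] SampSp S)ˣ) : SampSp S →L[ℂ] SampSp S) := by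
          rw [mul_assoc]
      _ = ((hu.unit⁻¹ : (SampSp S →L[ℂ] SampSp S)ˣ) : SampSp S →L[ℂ] SampSp S) := by
          rw [h1, one_mul]
  have hvS_cont : Continuous vS := by
    have hfe : vS = fun E => -∑ j : Fin m, ((d j : ℂ) ^ 2 * lamB ((v j - E) / cR) / cR) • Pj j :=
      funext hvS_formula
    rw [hfe]
    refine Continuous.neg (continuous_finset_sum _ fun j _ => ?_)
    refine Continuous.smul (f := fun E : ℝ => ((d j : ℂ) ^ 2 * lamB ((v j - E) / cR) / cR)) ?_ continuous_const
    refine Continuous.div_const (Continuous.mul continuous_const ?_) _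
    exact continuous_lamB.comp ((continuous_const.sub continuous_id).div_const cR)
  have hA_cont : Continuous (fun E : ℝ => hS + vS E - (E : ℂ) • 1) := by
    refine Continuous.sub (continuous_const.add hvS_cont) ?_
    exact Complex.continuous_ofReal.smul continuous_const
  have hmv_cont : Continuous mv := by
    have hfe : mv = fun E => Ring.inverse (hS + vS E - (E : ℂ) • 1) := funext hmv_eq
    rw [hfe]
    refine continuous_iff_continuousAt.mpr fun E => ?_
    have hU : ContinuousAt (Ring.inverse : (SampSp S →L[ℂ] SampSp S) → _)
        (hS + vS E - (E : ℂ) • 1) := by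
      have := NormedRing.inverse_continuousAt (hSP E).unit
      rwa [(hSP E).unit_spec] at this
    exact ContinuousAt.comp (g := (Ring.inverse : (SampSp S →L[ℂ] SampSp S) → _)) hU
      hA_cont.continuousAt
  set M : ℝ := ‖hS‖ + D + 1 with hM
  have houter : ∀ E : ℝ, M ≤ |E| → ‖mv E‖ ≤ 1 := by
    intro E hE
    have h1 : (hS + vS E - (E : ℂ) • 1) * mv E = 1 := (hmv E).1
    have h2 : (E : ℂ) • mv E = (hS + vS E) * mv E - 1 := by
      have h0 := h1
      rw [sub_mul, smul_mul_assoc, one_mul] at h0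
      rw [eq_sub_iff_add_eq, add_comm]
      exact (sub_eq_iff_eq_add.mp h0).symm
    have hone : ‖(1 : SampSp S →L[ℂ] SampSp S)‖ ≤ 1 := by
      rw [ContinuousLinearMap.one_def]
      exact ContinuousLinearMap.norm_id_le
    have h3 : |E| * ‖mv E‖ ≤ (‖hS‖ + D) * ‖mv E‖ + 1 := by
      have hl : ‖(E : ℂ) • mv E‖ = |E| * ‖mv E‖ := by
        have := norm_smul (E : ℂ) (mv E)
        rwa [Complex.norm_real, Real.norm_eq_abs] at this
      calc |E| * ‖mv E‖ = ‖(E : ℂ) • mv E‖ := hl.symm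
        _ = ‖(hS + vS E) * mv E - 1‖ := by rw [h2]
        _ ≤ ‖(hS + vS E) * mv E‖ + ‖(1 : SampSp S →L[ℂ] SampSp S)‖ := norm_sub_le _ _
        _ ≤ ‖hS + vS E‖ * ‖mv E‖ + 1 := add_le_add (norm_mul_le _ _) hone
        _ ≤ (‖hS‖ + D) * ‖mv E‖ + 1 := by
            have h4 : ‖hS + vS E‖ ≤ ‖hS‖ + D :=
              le_trans (norm_add_le _ _) (add_le_add_right (hvS_bound E) _)
            have h5 : 0 ≤ ‖mv E‖ := norm_nonneg _
            nlinarith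
    nlinarith [norm_nonneg (mv E)]
  have part1 : BddAbove (Set.range fun E : ℝ => ‖mv E‖) := by
    obtain ⟨B, hB⟩ := (isCompact_Icc.image hmv_cont.norm (s := Set.Icc (-M) M)).bddAbove
    refine ⟨max B 1, ?_⟩
    rintro r ⟨E, rfl⟩
    rcases le_or_gt (|E|) M with hE | hE
    · have hmem : ‖mv E‖ ∈ (fun E => ‖mv E‖) '' Set.Icc (-M) M :=
        ⟨E, ⟨(abs_le.mp hE).1, (abs_le.mp hE).2⟩, rfl⟩
      exact le_trans (hB hmem) (le_max_left _ _)
    · exact le_trans (houter E hE.le) (le_max_right _ _)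
  refine ⟨part1, ?_⟩
  intro w _ ξ hξ E
  set C : ℝ := ⨆ E : ℝ, ‖mv E‖ with hC
  have hCle : ∀ E' : ℝ, ‖mv E'‖ ≤ C := fun E' => le_ciSup part1 E'
  set t : SampSp S →L[ℂ] SampSp S := ((ξ : ℂ) • w) * mv E with ht
  have htnorm : ‖t‖ < 1 := by
    calc ‖t‖ ≤ ‖(ξ : ℂ) • w‖ * ‖mv E‖ := norm_mul_le _ _
      _ ≤ (|ξ| * ‖w‖) * C := by
          have h1 : ‖(ξ : ℂ) • w‖ = |ξ| * ‖w‖ := by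
            have := norm_smul (ξ : ℂ) w
            rwa [Complex.norm_real, Real.norm_eq_abs] at this
          rw [h1]
          exact mul_le_mul_of_nonneg_left (hCle E) (by positivity)
      _ = |ξ| * C * ‖w‖ := by ring
      _ < 1 := hξ
  have hunit1 : IsUnit (1 + t) := by
    have h2 : ‖-t‖ < 1 := by rwa [norm_neg]
    exact ⟨Units.oneSub (-t) h2, by rw [Units.val_oneSub, sub_neg_eq_add]⟩
  have hfactor : (1 + t) * (hS + vS E - (E : ℂ) • 1) = hS + (ξ : ℂ) • w + vS E - (E : ℂ) • 1 := by
    have h3 : t * (hS + vS E - (E : ℂ) • 1) = (ξ : ℂ) • w := by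
      rw [ht, mul_assoc, (hmv E).2, mul_one]
    rw [add_mul, one_mul, h3]
    abel
  rw [← hfactor]
  exact hunit1.mul (hSP E)
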